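/- Under the hypotheses of the cornerstone theorem (F : X ⇉ Y with closed graph between Fréchet spaces, U, V open, D′F(x,y)(Πₛ(X)) ⊇ C for all (x,y) ∈ (U × V) ∩ graph(F)), if additionally Πₛ(X) is compact, then for all (x,y) ∈ graph(F) with x + Πₛ(X) ⊆ U and [y, y + C] ⊆ V, the set F(x + Πₛ(X)) itself (without closure) contains y + C. -/

import Mathlib

open Filter Topology Set Pointwise

/-- The standard Fréchet metric built from a countable family of seminorms. -/
noncomputable def frechetRho {X : Type*} [AddCommGroup X] [Module ℝ X]
    (p : ℕ → Seminorm ℝ X) (x y : X) : ℝ :=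
  ⨆ n, (2 : ℝ)⁻¹ ^ n * p n (x - y) / (1 + p n (x - y))

/-- `Πₛ(X) = {x : ‖x‖ₙ ≤ sₙ for all n}`. -/
def PiS {X : Type*} [AddCommGroup X] [Module ℝ X] (p : ℕ → Seminorm ℝ X) (s : ℕ → ℝ) :
    Set X := {x | ∀ n, p n x ≤ s n}

/-- The contingent variation `D′F(x,y)(A)`: `v ∈ D′F(x,y)(A)` iff there are `tₖ ↓ 0`,
`aₖ ∈ A` and `zₖ ∈ F(x + tₖ aₖ)` with `ρ_Y(zₖ, y + tₖ v)/tₖ → 0`. -/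
def contVar {X Y : Type*} [AddCommGroup X] [Module ℝ X] [AddCommGroup Y] [Module ℝ Y]
    (q : ℕ → Seminorm ℝ Y) (F : X → Set Y) (x : X) (y : Y) (A : Set X) : Set Y :=
  {v | ∃ (t : ℕ → ℝ) (a : ℕ → X) (z : ℕ → Y),
    (∀ k, 0 < t k) ∧ Filter.Tendsto t Filter.atTop (nhds 0) ∧ (∀ k, a k ∈ A) ∧
    (∀ k, z k ∈ F (x + t k • a k)) ∧
    Filter.Tendsto (fun k => frechetRho q (z k) (y + t k • v) / t k) Filter.atTop (nhds 0)}

/-- The `ρ`-closure of a set. -/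
def rhoClosure {Y : Type*} [AddCommGroup Y] [Module ℝ Y] (q : ℕ → Seminorm ℝ Y)
    (A : Set Y) : Set Y := {y | ∀ ε > (0 : ℝ), ∃ a ∈ A, frechetRho q a y < ε}

/-- Openness with respect to the Fréchet metric `ρ`. -/
def RhoOpen {X : Type*} [AddCommGroup X] [Module ℝ X] (p : ℕ → Seminorm ℝ X)
    (U : Set X) : Prop := ∀ x ∈ U, ∃ ε > (0 : ℝ), ∀ x', frechetRho p x x' < ε → x' ∈ U


set_option maxHeartbeats 1600000

section helpers
variable {Y : Type*} [AddCommGroup Y] [Module ℝ Y] (q : ℕ → Seminorm ℝ Y)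

lemma fr_term_nonneg (n : ℕ) (a b : Y) :
    0 ≤ (2 : ℝ)⁻¹ ^ n * q n (a - b) / (1 + q n (a - b)) := by
  have h := apply_nonneg (q n) (a - b)
  positivity

lemma fr_term_le_one (n : ℕ) (a b : Y) :
    (2 : ℝ)⁻¹ ^ n * q n (a - b) / (1 + q n (a - b)) ≤ (2:ℝ)⁻¹ ^ n := by
  have h := apply_nonneg (q n) (a - b)
  rw [div_le_iff₀ (by linarith)]
  have : (2:ℝ)⁻¹ ^ n * q n (a-b) ≤ (2:ℝ)⁻¹^n * (1 + q n (a-b)) := by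
    have : (0:ℝ) ≤ (2:ℝ)⁻¹ ^ n := by positivity
    nlinarith
  linarith [this]

lemma fr_bdd (a b : Y) : BddAbove (Set.range fun n => (2 : ℝ)⁻¹ ^ n * q n (a - b) / (1 + q n (a - b))) := by
  refine ⟨1, ?_⟩
  rintro _ ⟨n, rfl⟩
  calc (2 : ℝ)⁻¹ ^ n * q n (a - b) / (1 + q n (a - b)) ≤ (2:ℝ)⁻¹ ^ n := fr_term_le_one q n a b
  _ ≤ 1 := pow_le_one₀ (by norm_num) (by norm_num)

lemma frechetRho_nonneg (a b : Y) : 0 ≤ frechetRho q a b :=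
  Real.iSup_nonneg (fun n => fr_term_nonneg q n a b)

lemma frechetRho_le {a b : Y} {M : ℝ}
    (h : ∀ n, (2 : ℝ)⁻¹ ^ n * q n (a - b) / (1 + q n (a - b)) ≤ M) :
    frechetRho q a b ≤ M := ciSup_le h

lemma le_frechetRho (n : ℕ) (a b : Y) :
    (2 : ℝ)⁻¹ ^ n * q n (a - b) / (1 + q n (a - b)) ≤ frechetRho q a b :=
  le_ciSup (fr_bdd q a b) n

lemma fdiv_mono {r t : ℝ} (hr : 0 ≤ r) (h : r ≤ t) : r / (1 + r) ≤ t / (1 + t) := by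
  rw [div_le_div_iff₀ (by linarith) (by linarith)]
  nlinarith

lemma frechetRho_triangle (a b c : Y) :
    frechetRho q a c ≤ frechetRho q a b + frechetRho q b c := by
  refine frechetRho_le q fun n => ?_
  have h1 := le_frechetRho q n a b
  have h2 := le_frechetRho q n b c
  set r1 := q n (a - b) with hr1
  set r2 := q n (b - c) with hr2
  have hn1 : 0 ≤ r1 := apply_nonneg _ _
  have hn2 : 0 ≤ r2 := apply_nonneg _ _
  have hsub : q n (a - c) ≤ r1 + r2 := by
    have : a - c = (a - b) + (b - c) := by abel
    rw [this]; exact map_add_le_add _ _ _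
  have hpow : (0:ℝ) ≤ (2:ℝ)⁻¹ ^ n := by positivity
  have step1 : q n (a-c) / (1 + q n (a-c)) ≤ (r1+r2)/(1+(r1+r2)) :=
    fdiv_mono (apply_nonneg _ _) hsub
  have step2 : (r1+r2)/(1+(r1+r2)) ≤ r1/(1+r1) + r2/(1+r2) := by
    have e1 : r1/(1+(r1+r2)) ≤ r1/(1+r1) :=
      div_le_div_of_nonneg_left hn1 (by linarith) (by linarith)
    have e2 : r2/(1+(r1+r2)) ≤ r2/(1+r2) :=
      div_le_div_of_nonneg_left hn2 (by linarith) (by linarith)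
    have : (r1+r2)/(1+(r1+r2)) = r1/(1+(r1+r2)) + r2/(1+(r1+r2)) := by ring
    linarith
  calc (2 : ℝ)⁻¹ ^ n * q n (a - c) / (1 + q n (a - c))
      = (2:ℝ)⁻¹^n * (q n (a-c) / (1 + q n (a-c))) := by ring
    _ ≤ (2:ℝ)⁻¹^n * (r1/(1+r1) + r2/(1+r2)) := by
        apply mul_le_mul_of_nonneg_left (le_trans step1 step2) hpow
    _ = (2:ℝ)⁻¹^n * r1/(1+r1) + (2:ℝ)⁻¹^n * r2/(1+r2) := by ring
    _ ≤ frechetRho q a b + frechetRho q b c := add_le_add h1 h2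

lemma frechetRho_comm (a b : Y) : frechetRho q a b = frechetRho q b a := by
  unfold frechetRho
  congr 1; funext n; rw [map_sub_rev]

lemma frechetRho_translate (a b v : Y) : frechetRho q (a + v) (b + v) = frechetRho q a b := by
  unfold frechetRho
  congr 1; funext n; rw [add_sub_add_right_eq_sub]

lemma frechetRho_sub_zero (a b : Y) : frechetRho q a b = frechetRho q (a - b) 0 := by
  unfold frechetRho
  congr 1; funext n; rw [sub_zero]

lemma frechetRho_self (a : Y) : frechetRho q a a = 0 := by
  apply le_antisymm
  · refine frechetRho_le q fun n => ?_
    simp [sub_self]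
  · exact frechetRho_nonneg q a a

end helpers

section helpers2
variable {Y : Type*} [AddCommGroup Y] [Module ℝ Y] (q : ℕ → Seminorm ℝ Y)
/-- If each seminorm of `v` is `≤ δ * b n` for suitable small `δ`, the metric is `< ε`. -/
lemma rho_small_of_bounds (b : ℕ → ℝ) (hb : ∀ n, 0 ≤ b n) {ε : ℝ} (hε : 0 < ε) :
    ∃ δ > 0, ∀ v : Y, (∀ n, q n v ≤ δ * b n) → frechetRho q v 0 < ε := by
  obtain ⟨N, hN⟩ : ∃ N : ℕ, (2:ℝ)⁻¹ ^ N ≤ ε / 2 := by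
    obtain ⟨N, hN⟩ := exists_pow_lt_of_lt_one (half_pos hε) (by norm_num : (2:ℝ)⁻¹ < 1)
    exact ⟨N, hN.le⟩
  set M : ℝ := 1 + ∑ n ∈ Finset.range N, b n with hM
  have hMpos : 0 < M := by
    have : 0 ≤ ∑ n ∈ Finset.range N, b n := Finset.sum_nonneg fun n _ => hb n
    linarith
  have hbM : ∀ n < N, b n ≤ M := by
    intro n hn
    have : b n ≤ ∑ m ∈ Finset.range N, b m :=
      Finset.single_le_sum (fun m _ => hb m) (Finset.mem_range.2 hn)
    linarith
  refine ⟨ε / (2 * M), by positivity, fun v hv => ?_⟩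
  have key : frechetRho q v 0 ≤ ε / 2 := by
    refine frechetRho_le q fun n => ?_
    rw [sub_zero]
    rcases lt_or_ge n N with hn | hn
    · have h1 : (2 : ℝ)⁻¹ ^ n * q n v / (1 + q n v) ≤ q n v := by
        have hq := apply_nonneg (q n) v
        have hp : (2:ℝ)⁻¹ ^ n ≤ 1 := pow_le_one₀ (by norm_num) (by norm_num)
        rw [div_le_iff₀ (by linarith)]
        nlinarith
      have h2 : q n v ≤ ε / (2 * M) * M := by
        calc q n v ≤ ε / (2*M) * b n := hv n
        _ ≤ ε / (2*M) * M := by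
            apply mul_le_mul_of_nonneg_left (hbM n hn) (by positivity)
      have h3 : ε / (2 * M) * M = ε / 2 := by field_simp
      linarith
    · have ha : (2 : ℝ)⁻¹ ^ n * q n v / (1 + q n v) ≤ (2:ℝ)⁻¹ ^ n := by
        have := fr_term_le_one q n v 0
        rwa [sub_zero] at this
      have hb2 : (2:ℝ)⁻¹ ^ n ≤ (2:ℝ)⁻¹ ^ N := pow_le_pow_of_le_one (by norm_num) (by norm_num) hn
      linarith
  linarith

/-- pointwise seminorm convergence implies ρ-convergence -/
lemma rho_zero_of_seminorms {v : ℕ → Y}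
    (h : ∀ n, Tendsto (fun k => q n (v k)) atTop (𝓝 0)) :
    Tendsto (fun k => frechetRho q (v k) 0) atTop (𝓝 0) := by
  rw [Metric.tendsto_atTop]
  intro ε hε
  obtain ⟨N, hN⟩ : ∃ N : ℕ, (2:ℝ)⁻¹ ^ N ≤ ε / 2 := by
    obtain ⟨N, hN⟩ := exists_pow_lt_of_lt_one (half_pos hε) (by norm_num : (2:ℝ)⁻¹ < 1)
    exact ⟨N, hN.le⟩
  have hev : ∀ᶠ k in atTop, ∀ n ∈ Finset.range N, q n (v k) ≤ ε / 2 := by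
    rw [eventually_all_finset]
    intro n _
    have := (h n).eventually (eventually_le_nhds (show (0:ℝ) < ε/2 by linarith))
    exact this
  obtain ⟨K, hK⟩ := hev.exists_forall_of_atTop
  refine ⟨K, fun k hk => ?_⟩
  rw [Real.dist_eq, sub_zero, abs_of_nonneg (frechetRho_nonneg q _ _)]
  have key : frechetRho q (v k) 0 ≤ ε / 2 := by
    refine frechetRho_le q fun n => ?_
    rw [sub_zero]
    rcases lt_or_ge n N with hn | hn
    · have h1 : (2 : ℝ)⁻¹ ^ n * q n (v k) / (1 + q n (v k)) ≤ q n (v k) := by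
        have hq := apply_nonneg (q n) (v k)
        have hp : (2:ℝ)⁻¹ ^ n ≤ 1 := pow_le_one₀ (by norm_num) (by norm_num)
        rw [div_le_iff₀ (by linarith)]
        nlinarith
      exact h1.trans (hK k hk n (Finset.mem_range.2 hn))
    · have ha : (2 : ℝ)⁻¹ ^ n * q n (v k) / (1 + q n (v k)) ≤ (2:ℝ)⁻¹ ^ n := by
        have := fr_term_le_one q n (v k) 0
        rwa [sub_zero] at this
      have hb2 : (2:ℝ)⁻¹ ^ n ≤ (2:ℝ)⁻¹ ^ N := pow_le_pow_of_le_one (by norm_num) (by norm_num) hn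
      linarith
  linarith

/-- ρ-convergence implies pointwise seminorm convergence -/
lemma seminorms_of_rho_zero {v : ℕ → Y}
    (h : Tendsto (fun k => frechetRho q (v k) 0) atTop (𝓝 0)) (n : ℕ) :
    Tendsto (fun k => q n (v k)) atTop (𝓝 0) := by
  have hterm : Tendsto (fun k => (2 : ℝ)⁻¹ ^ n * q n (v k) / (1 + q n (v k))) atTop (𝓝 0) := by
    apply squeeze_zero (fun k => by simpa using fr_term_nonneg q n (v k) 0)
      (fun k => by simpa using le_frechetRho q n (v k) 0) h
  have hf : Tendsto (fun k => q n (v k) / (1 + q n (v k))) atTop (𝓝 0) := by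
    have := hterm.const_mul ((2:ℝ) ^ n)
    rw [mul_zero] at this
    convert this using 2 with k
    rw [← mul_div_assoc, ← mul_assoc, ← mul_pow]
    norm_num
  have hev : ∀ᶠ k in atTop, q n (v k) ≤ 2 * (q n (v k) / (1 + q n (v k))) := by
    filter_upwards [hf.eventually (eventually_lt_nhds (by norm_num : (0:ℝ) < 1/2))] with k hk
    have hq := apply_nonneg (q n) (v k)
    set r := q n (v k)
    have hr1 : r < 1 := by
      by_contra hr
      push_neg at hr
      have : (1:ℝ)/2 ≤ r / (1+r) := by
        rw [le_div_iff₀ (by linarith)]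
        linarith
      linarith
    rw [← sub_nonneg]
    have heq : 2 * (r / (1+r)) - r = r * (1 - r) / (1 + r) := by field_simp; ring
    rw [heq]
    exact div_nonneg (mul_nonneg hq (by linarith)) (by linarith)
  have h2f : Tendsto (fun k => 2 * (q n (v k) / (1 + q n (v k)))) atTop (𝓝 0) := by
    simpa using hf.const_mul 2
  exact squeeze_zero' (Eventually.of_forall fun k => apply_nonneg _ _) hev h2f

end helpers2

section stepsec
variable {X Y : Type*} [AddCommGroup X] [Module ℝ X] [AddCommGroup Y] [Module ℝ Y]

/-- Extract a single small step from membership in the contingent variation. -/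
lemma contVar_step (q : ℕ → Seminorm ℝ Y) (F : X → Set Y) (x₀ : X) (y₀ c : Y)
    (A : Set X) (hc : c ∈ contVar q F x₀ y₀ A) {η T : ℝ} (hη : 0 < η) (hT : 0 < T) :
    ∃ t a z, 0 < t ∧ t ≤ T ∧ a ∈ A ∧ z ∈ F (x₀ + t • a) ∧
      frechetRho q z (y₀ + t • c) ≤ η * t := by
  obtain ⟨t, a, z, htpos, ht0, ha, hz, herr⟩ := hc
  obtain ⟨N1, hN1⟩ := Metric.tendsto_atTop.mp ht0 T hT
  obtain ⟨N2, hN2⟩ := Metric.tendsto_atTop.mp herr η hη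
  set k := max N1 N2
  refine ⟨t k, a k, z k, htpos k, ?_, ha k, hz k, ?_⟩
  · have := hN1 k (le_max_left _ _)
    rw [Real.dist_eq, sub_zero, abs_of_pos (htpos k)] at this
    exact this.le
  · have := hN2 k (le_max_right _ _)
    rw [Real.dist_eq, sub_zero, abs_of_nonneg (div_nonneg (frechetRho_nonneg q _ _) (htpos k).le)] at this
    calc frechetRho q (z k) (y₀ + t k • c)
        = frechetRho q (z k) (y₀ + t k • c) / t k * t k := by
          rw [div_mul_cancel₀ _ (htpos k).ne']
      _ ≤ η * t k := by
          apply mul_le_mul_of_nonneg_right this.le (htpos k).le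

end stepsec

lemma cornerstone_key
    {X Y : Type*} [AddCommGroup X] [Module ℝ X] [AddCommGroup Y] [Module ℝ Y]
    (p : ℕ → Seminorm ℝ X) (q : ℕ → Seminorm ℝ Y)
    (hcompX : ∀ u : ℕ → X,
      (∀ ε > (0 : ℝ), ∃ N, ∀ m ≥ N, ∀ k ≥ N, frechetRho p (u m) (u k) < ε) →
      ∃ x : X, Tendsto (fun k => frechetRho p (u k) x) atTop (𝓝 0))
    (hcompY : ∀ u : ℕ → Y,
      (∀ ε > (0 : ℝ), ∃ N, ∀ m ≥ N, ∀ k ≥ N, frechetRho q (u m) (u k) < ε) →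
      ∃ y : Y, Tendsto (fun k => frechetRho q (u k) y) atTop (𝓝 0))
    (F : X → Set Y)
    (hgraph : ∀ (u : ℕ → X) (w : ℕ → Y) (x : X) (y : Y), (∀ k, w k ∈ F (u k)) →
      Tendsto (fun k => frechetRho p (u k) x) atTop (𝓝 0) →
      Tendsto (fun k => frechetRho q (w k) y) atTop (𝓝 0) → y ∈ F x)
    (U : Set X) (V : Set Y)
    (s : ℕ → ℝ) (hs : ∀ n, 0 ≤ s n)
    (C : Set Y)
    (hD : ∀ x y, y ∈ F x → x ∈ U → y ∈ V → C ⊆ contVar q F x y (PiS p s))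
    (x : X) (y c : Y) (hc : c ∈ C) (hxy : y ∈ F x)
    (hxU : ∀ u ∈ PiS p s, x + u ∈ U)
    (ε₀ ε' : ℝ)
    (hV₀ : ∀ t ∈ Icc (0:ℝ) 1, ∀ z, frechetRho q z (y + t • c) ≤ ε₀ → z ∈ V)
    (hε' : 0 < ε') (hε'₀ : ε' ≤ ε₀) :
    ∃ u ∈ PiS p s, ∃ w ∈ F (x + u), frechetRho q w (y + c) ≤ ε' := by
  classical
  set Inv : ℝ → X → Y → Prop := fun τ u w =>
    0 ≤ τ ∧ τ ≤ 1 ∧ (∀ n, p n u ≤ τ * s n) ∧ w ∈ F (x + u) ∧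
      frechetRho q w (y + τ • c) ≤ ε' * τ with hInvDef
  set Adm : ℝ → X → Y → ℝ → Prop := fun τ u w t =>
    0 < t ∧ t ≤ 1 - τ ∧ ∃ a z, (∀ n, p n a ≤ s n) ∧ z ∈ F (x + u + t • a) ∧
      frechetRho q z (w + t • c) ≤ ε' * t with hAdmDef
  -- membership of invariant states in U × V
  have hmem : ∀ τ u w, Inv τ u w → x + u ∈ U ∧ w ∈ V := by
    intro τ u w hI
    obtain ⟨h0, h1, hu, hw, hρ⟩ := id hI
    constructor
    · exact hxU u (fun n => (hu n).trans (mul_le_of_le_one_left (hs n) h1))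
    · refine hV₀ τ ⟨h0, h1⟩ w (hρ.trans ?_)
      calc ε' * τ ≤ ε' * 1 := by nlinarith
        _ ≤ ε₀ := by linarith
  -- existence of admissible steps below any fixed time cap
  have hadm_ex : ∀ τ u w, Inv τ u w → τ < 1 → ∃ t, Adm τ u w t := by
    intro τ u w hI hτ
    obtain ⟨hU', hV'⟩ := hmem τ u w hI
    have hcv : c ∈ contVar q F (x + u) w (PiS p s) :=
      hD (x + u) w hI.2.2.2.1 hU' hV' hc
    obtain ⟨t, a, z, htpos, htle, ha, hz, herr⟩ :=
      contVar_step q F (x + u) w c (PiS p s) hcv hε' (show (0:ℝ) < 1 - τ by linarith)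
    exact ⟨t, htpos, htle, a, z, ha, hz, herr⟩
  -- near-maximal step choice
  have hstep_ex : ∀ st : ℝ × X × Y, ∃ st' : ℝ × X × Y,
      Inv st.1 st.2.1 st.2.2 →
        (Inv st'.1 st'.2.1 st'.2.2 ∧ st.1 ≤ st'.1 ∧
         (∀ n, p n (st'.2.1 - st.2.1) ≤ (st'.1 - st.1) * s n) ∧
         frechetRho q st'.2.2 (st.2.2 + (st'.1 - st.1) • c) ≤ ε' * (st'.1 - st.1) ∧
         (st.1 < 1 → st.1 < st'.1 ∧
            ∀ t, Adm st.1 st.2.1 st.2.2 t → t ≤ 2 * (st'.1 - st.1))) := by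
    rintro ⟨τ, u, w⟩
    by_cases hI : Inv τ u w
    · by_cases hτ : τ < 1
      · obtain ⟨hI0, hI1, hIu, hIw, hIρ⟩ := id hI
        have hne : {t | Adm τ u w t}.Nonempty := hadm_ex τ u w hI hτ
        have hbdd : BddAbove {t | Adm τ u w t} := by
          refine ⟨1, fun t ht => ?_⟩
          obtain ⟨h1, h2, -⟩ := ht
          linarith
        have hσpos : 0 < sSup {t | Adm τ u w t} := by
          obtain ⟨t₀, ht₀⟩ := hne
          exact lt_of_lt_of_le ht₀.1 (le_csSup hbdd ht₀)
        obtain ⟨t, htA, htσ⟩ := exists_lt_of_lt_csSup hne (half_lt_self hσpos)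
        obtain ⟨htpos, htle, a, z, ha, hz, herr⟩ := htA
        refine ⟨(τ + t, u + t • a, z), fun _ => ?_⟩
        have hsmul : ∀ n, p n (t • a) = t * p n a := by
          intro n
          rw [map_smul_eq_mul, Real.norm_eq_abs, abs_of_pos htpos]
        have hkey : ∀ n, p n (u + t • a) ≤ (τ + t) * s n := by
          intro n
          calc p n (u + t • a) ≤ p n u + p n (t • a) := map_add_le_add _ _ _
            _ ≤ τ * s n + t * s n := by
                rw [hsmul n]
                exact add_le_add (hIu n) (mul_le_mul_of_nonneg_left (ha n) htpos.le)
            _ = (τ + t) * s n := by ring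
        have hFz : z ∈ F (x + (u + t • a)) := by rwa [← add_assoc]
        have hρz : frechetRho q z (y + (τ + t) • c) ≤ ε' * (τ + t) := by
          have hsplit : y + (τ + t) • c = (y + τ • c) + t • c := by
            rw [add_smul]; abel
          calc frechetRho q z (y + (τ + t) • c)
              ≤ frechetRho q z (w + t • c) + frechetRho q (w + t • c) (y + (τ + t) • c) :=
                frechetRho_triangle q _ _ _
            _ = frechetRho q z (w + t • c) + frechetRho q w (y + τ • c) := by
                rw [hsplit, frechetRho_translate]
            _ ≤ ε' * t + ε' * τ := add_le_add herr hIρ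
            _ = ε' * (τ + t) := by ring
        refine ⟨⟨by simp only; linarith, by simp only; linarith, hkey, hFz, hρz⟩,
          by simp only; linarith, ?_, ?_, fun _ => ⟨by simp only; linarith, ?_⟩⟩
        · intro n
          simp only [add_sub_cancel_left]
          rw [hsmul n]
          exact mul_le_mul_of_nonneg_left (ha n) htpos.le
        · simp only [add_sub_cancel_left]
          exact herr
        · intro t' ht'
          have := le_csSup hbdd ht'
          simp only [add_sub_cancel_left]
          linarith
      · refine ⟨(τ, u, w), fun _ => ⟨hI, le_rfl, ?_, ?_, fun h => absurd h hτ⟩⟩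
        · intro n
          simp [sub_self]
        · simp only [sub_self, zero_smul, add_zero]
          rw [frechetRho_self]
          simp
    · exact ⟨(τ, u, w), fun h => absurd h hI⟩
  choose nextf hnext using hstep_ex
  set g : ℕ → ℝ × X × Y := fun k => nextf^[k] (0, 0, y) with hgdef
  have hg : ∀ k, g (k+1) = nextf (g k) := fun k => Function.iterate_succ_apply' _ _ _
  have hInvk : ∀ k, Inv (g k).1 (g k).2.1 (g k).2.2 := by
    intro k
    induction k with
    | zero =>
        show Inv (0:ℝ) (0:X) y
        refine ⟨le_rfl, zero_le_one, ?_, ?_, ?_⟩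
        · intro n; simp
        · rwa [add_zero]
        · rw [zero_smul, add_zero, frechetRho_self]
          simp
    | succ k ih =>
        rw [hg k]
        exact (hnext (g k) ih).1
  have hstepk : ∀ k,
      (g k).1 ≤ (g (k+1)).1 ∧
      (∀ n, p n ((g (k+1)).2.1 - (g k).2.1) ≤ ((g (k+1)).1 - (g k).1) * s n) ∧
      frechetRho q (g (k+1)).2.2 ((g k).2.2 + ((g (k+1)).1 - (g k).1) • c)
        ≤ ε' * ((g (k+1)).1 - (g k).1) ∧
      ((g k).1 < 1 → (g k).1 < (g (k+1)).1 ∧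
        ∀ t, Adm (g k).1 (g k).2.1 (g k).2.2 t → t ≤ 2 * ((g (k+1)).1 - (g k).1)) := by
    intro k
    rw [hg k]
    exact (hnext (g k) (hInvk k)).2
  
  set τs : ℕ → ℝ := fun k => (g k).1 with hτsdef
  set us : ℕ → X := fun k => (g k).2.1 with husdef
  set ws : ℕ → Y := fun k => (g k).2.2 with hwsdef
  have hτmono : Monotone τs := monotone_nat_of_le_succ fun k => (hstepk k).1
  have hτ0 : τs 0 = 0 := rfl
  have hu0 : us 0 = 0 := rfl
  have hw0 : ws 0 = y := rfl
  have hτ01 : ∀ k, 0 ≤ τs k ∧ τs k ≤ 1 := fun k => ⟨(hInvk k).1, (hInvk k).2.1⟩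
  have hud : ∀ k m, k ≤ m → ∀ n, p n (us m - us k) ≤ (τs m - τs k) * s n := by
    intro k m hkm
    induction m, hkm using Nat.le_induction with
    | base => intro n; simp [sub_self]
    | succ m hkm ih =>
        intro n
        have h1 := (hstepk m).2.1 n
        calc p n (us (m+1) - us k)
            ≤ p n (us (m+1) - us m) + p n (us m - us k) := by
              have hsp : us (m+1) - us k = (us (m+1) - us m) + (us m - us k) := by abel
              rw [hsp]; exact map_add_le_add _ _ _
          _ ≤ (τs (m+1) - τs m) * s n + (τs m - τs k) * s n := add_le_add h1 (ih n)
          _ = (τs (m+1) - τs k) * s n := by ring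
  have hwd : ∀ k m, k ≤ m →
      frechetRho q (ws m) (ws k + (τs m - τs k) • c) ≤ ε' * (τs m - τs k) := by
    intro k m hkm
    induction m, hkm using Nat.le_induction with
    | base =>
        rw [sub_self, zero_smul, add_zero, frechetRho_self]
        simp
    | succ m hkm ih =>
        have h2 := (hstepk m).2.2.1
        have hsplit : ws k + (τs (m+1) - τs k) • c
            = (ws k + (τs m - τs k) • c) + (τs (m+1) - τs m) • c := by
          rw [show τs (m+1) - τs k = (τs m - τs k) + (τs (m+1) - τs m) by ring, add_smul]
          abel
        calc frechetRho q (ws (m+1)) (ws k + (τs (m+1) - τs k) • c)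
            ≤ frechetRho q (ws (m+1)) (ws m + (τs (m+1) - τs m) • c)
              + frechetRho q (ws m + (τs (m+1) - τs m) • c) (ws k + (τs (m+1) - τs k) • c) :=
              frechetRho_triangle q _ _ _
          _ ≤ ε' * (τs (m+1) - τs m) + ε' * (τs m - τs k) := by
              rw [hsplit, frechetRho_translate]
              exact add_le_add h2 ih
          _ = ε' * (τs (m+1) - τs k) := by ring
  have hbddτ : BddAbove (Set.range τs) := ⟨1, by rintro _ ⟨k, rfl⟩; exact (hτ01 k).2⟩
  set T : ℝ := ⨆ k, τs k with hTdef
  have hτT : ∀ k, τs k ≤ T := fun k => le_ciSup hbddτ k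
  have hTconv : Tendsto τs atTop (𝓝 T) := tendsto_atTop_ciSup hτmono hbddτ
  have hT1 : T ≤ 1 := ciSup_le fun k => (hτ01 k).2
  have hT0 : 0 ≤ T := le_trans (hτ01 0).1 (hτT 0)
  -- Cauchy property of `us`
  have hCu : ∀ ε > (0:ℝ), ∃ N, ∀ m ≥ N, ∀ k ≥ N, frechetRho p (us m) (us k) < ε := by
    intro ε hε
    obtain ⟨δ, hδ, hδp⟩ := rho_small_of_bounds p s hs hε
    obtain ⟨N, hN⟩ := (hTconv.eventually (eventually_gt_nhds (show T - δ < T by linarith))).exists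
    have main : ∀ m k, N ≤ k → k ≤ m → frechetRho p (us m) (us k) < ε := by
      intro m k hk hkm
      rw [frechetRho_sub_zero]
      apply hδp
      intro n
      have h1 := hud k m hkm n
      have h2 : τs m - τs k ≤ δ := by
        have h3 := hτT m
        have h4 := hτmono hk
        linarith
      exact h1.trans (mul_le_mul_of_nonneg_right h2 (hs n))
    refine ⟨N, fun m hm k hk => ?_⟩
    rcases le_total k m with h | h
    · exact main m k hk h
    · rw [frechetRho_comm]; exact main k m hm h
  obtain ⟨uhat, huhat⟩ := hcompX us hCu
  -- Cauchy property of `ws`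
  have hCw : ∀ ε > (0:ℝ), ∃ N, ∀ m ≥ N, ∀ k ≥ N, frechetRho q (ws m) (ws k) < ε := by
    intro ε hε
    obtain ⟨δ₁, hδ₁, hδq⟩ :=
      rho_small_of_bounds q (fun n => q n c) (fun n => apply_nonneg _ _) (half_pos hε)
    have hδpos : 0 < min δ₁ (ε / (2 * (ε' + 1))) := lt_min hδ₁ (by positivity)
    set δ := min δ₁ (ε / (2 * (ε' + 1))) with hδdef
    obtain ⟨N, hN⟩ := (hTconv.eventually (eventually_gt_nhds (show T - δ < T by linarith))).exists
    have main : ∀ m k, N ≤ k → k ≤ m → frechetRho q (ws m) (ws k) < ε := by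
      intro m k hk hkm
      have hd0 : 0 ≤ τs m - τs k := by have := hτmono hkm; linarith
      have h2 : τs m - τs k ≤ δ := by
        have h3 := hτT m
        have h4 := hτmono hk
        linarith
      have hterm2 : frechetRho q (ws k + (τs m - τs k) • c) (ws k) < ε / 2 := by
        rw [frechetRho_sub_zero, add_sub_cancel_left]
        apply hδq
        intro n
        rw [map_smul_eq_mul, Real.norm_eq_abs, abs_of_nonneg hd0]
        exact mul_le_mul_of_nonneg_right (h2.trans (min_le_left _ _))
          (apply_nonneg _ _)
      have hterm1 : ε' * (τs m - τs k) ≤ ε / 2 := by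
        have h5 : τs m - τs k ≤ ε / (2 * (ε' + 1)) := h2.trans (min_le_right _ _)
        have h6 := mul_le_mul_of_nonneg_left h5 hε'.le
        have h7 : ε' * (ε / (2 * (ε' + 1))) ≤ ε / 2 := by
          rw [← mul_div_assoc, div_le_div_iff₀ (by positivity) two_pos]
          nlinarith
        linarith
      calc frechetRho q (ws m) (ws k)
          ≤ frechetRho q (ws m) (ws k + (τs m - τs k) • c)
            + frechetRho q (ws k + (τs m - τs k) • c) (ws k) := frechetRho_triangle q _ _ _
        _ < ε / 2 + ε / 2 := by
            have := hwd k m hkm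
            apply add_lt_add_of_le_of_lt (this.trans hterm1) hterm2
        _ = ε := by ring
    refine ⟨N, fun m hm k hk => ?_⟩
    rcases le_total k m with h | h
    · exact main m k hk h
    · rw [frechetRho_comm]; exact main k m hm h
  obtain ⟨what, hwhat⟩ := hcompY ws hCw
  -- seminorm convergence of us towards uhat
  have husn : ∀ n, Tendsto (fun k => p n (uhat - us k)) atTop (𝓝 0) := by
    intro n
    have h0 : Tendsto (fun k => frechetRho p (us k - uhat) 0) atTop (𝓝 0) := by
      have : (fun k => frechetRho p (us k - uhat) 0) = fun k => frechetRho p (us k) uhat := by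
        funext k; rw [← frechetRho_sub_zero]
      rw [this]; exact huhat
    have h1 := seminorms_of_rho_zero p h0 n
    have : (fun k => p n (uhat - us k)) = fun k => p n (us k - uhat) := by
      funext k; rw [map_sub_rev]
    rw [this]; exact h1
  have hi : ∀ k n, p n (uhat - us k) ≤ (T - τs k) * s n := by
    intro k n
    have htend : Tendsto (fun m => (T - τs k) * s n + p n (uhat - us m)) atTop
        (𝓝 ((T - τs k) * s n)) := by
      have h0 := (husn n).const_add ((T - τs k) * s n)
      simpa using h0
    refine ge_of_tendsto htend ?_
    filter_upwards [eventually_ge_atTop k] with m hm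
    have htri : p n (uhat - us k) ≤ p n (uhat - us m) + p n (us m - us k) := by
      have hsp : uhat - us k = (uhat - us m) + (us m - us k) := by abel
      rw [hsp]; exact map_add_le_add _ _ _
    have h2 : p n (us m - us k) ≤ (T - τs k) * s n := by
      refine (hud k m hm n).trans (mul_le_mul_of_nonneg_right ?_ (hs n))
      have := hτT m; linarith
    linarith
  have hj : ∀ k, frechetRho q what (ws k + (T - τs k) • c) ≤ ε' * (T - τs k) := by
    intro k
    have hterm3 : Tendsto (fun m => frechetRho q ((τs m - T) • c) 0) atTop (𝓝 0) := by
      apply rho_zero_of_seminorms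
      intro n
      have habs : Tendsto (fun m => |τs m - T|) atTop (𝓝 0) := by
        have h := hTconv.sub_const T
        rw [sub_self] at h
        simpa using h.abs
      have := habs.mul_const (q n c)
      rw [zero_mul] at this
      have heq : (fun m => q n ((τs m - T) • c)) = fun m => |τs m - T| * q n c := by
        funext m; rw [map_smul_eq_mul, Real.norm_eq_abs]
      rw [heq]; exact this
    have htend : Tendsto (fun m => frechetRho q (ws m) what + ε' * (T - τs k)
        + frechetRho q ((τs m - T) • c) 0) atTop (𝓝 (0 + ε' * (T - τs k) + 0)) :=
      (hwhat.add_const _).add hterm3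
    rw [zero_add, add_zero] at htend
    refine ge_of_tendsto htend ?_
    filter_upwards [eventually_ge_atTop k] with m hm
    have h1 : frechetRho q what (ws k + (T - τs k) • c)
        ≤ frechetRho q what (ws m) + frechetRho q (ws m) (ws k + (τs m - τs k) • c)
          + frechetRho q (ws k + (τs m - τs k) • c) (ws k + (T - τs k) • c) := by
      have t1 := frechetRho_triangle q what (ws m) (ws k + (T - τs k) • c)
      have t2 := frechetRho_triangle q (ws m) (ws k + (τs m - τs k) • c)
        (ws k + (T - τs k) • c)
      linarith
    have h2 : frechetRho q (ws k + (τs m - τs k) • c) (ws k + (T - τs k) • c)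
        = frechetRho q ((τs m - T) • c) 0 := by
      rw [show ws k + (τs m - τs k) • c = (τs m - τs k) • c + ws k by abel,
        show ws k + (T - τs k) • c = (T - τs k) • c + ws k by abel,
        frechetRho_translate, frechetRho_sub_zero, ← sub_smul]
      norm_num
    have h3 : frechetRho q what (ws m) = frechetRho q (ws m) what := frechetRho_comm q _ _
    have h4 := hwd k m hm
    have h5 : ε' * (τs m - τs k) ≤ ε' * (T - τs k) :=
      mul_le_mul_of_nonneg_left (by linarith [hτT m]) hε'.le
    rw [h2, h3] at h1
    linarith
  -- the limit lies in the graph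
  have hwhatF : what ∈ F (x + uhat) := by
    apply hgraph (fun m => x + us m) ws (x + uhat) what (fun m => (hInvk m).2.2.2.1)
    · have heq : (fun m => frechetRho p (x + us m) (x + uhat))
          = fun m => frechetRho p (us m) uhat := by
        funext m
        rw [show x + us m = us m + x by abel, show x + uhat = uhat + x by abel,
          frechetRho_translate]
      rw [heq]; exact huhat
    · exact hwhat
  rcases eq_or_lt_of_le hT1 with hT1' | hT1'
  · -- T = 1 : we are done
    refine ⟨uhat, ?_, what, hwhatF, ?_⟩
    · intro n
      have h := hi 0 n
      rw [hτ0, hu0, sub_zero, sub_zero, hT1', one_mul] at h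
      exact h
    · have h := hj 0
      rw [hτ0, hw0, sub_zero, hT1', one_smul, mul_one] at h
      exact h
  · -- T < 1 : contradiction with near-maximality of steps
    exfalso
    have hInvhat : Inv T uhat what := by
      refine ⟨hT0, hT1, ?_, hwhatF, ?_⟩
      · intro n
        have h := hi 0 n
        rwa [hτ0, hu0, sub_zero, sub_zero] at h
      · have h := hj 0
        rwa [hτ0, hw0, sub_zero] at h
    obtain ⟨hUhat, hVhat⟩ := hmem T uhat what hInvhat
    have hcv : c ∈ contVar q F (x + uhat) what (PiS p s) :=
      hD (x + uhat) what hwhatF hUhat hVhat hc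
    obtain ⟨tb, a, z, htb, htble, ha, hz, herr⟩ :=
      contVar_step q F (x + uhat) what c (PiS p s) hcv (half_pos hε')
        (show (0:ℝ) < 1 - T by linarith)
    have hdiff : Tendsto (fun k => τs (k+1) - τs k) atTop (𝓝 0) := by
      have h1 : Tendsto (fun k => τs (k+1)) atTop (𝓝 T) :=
        hTconv.comp (tendsto_add_atTop_nat 1)
      simpa using h1.sub hTconv
    obtain ⟨K, hK⟩ :=
      (hdiff.eventually (eventually_lt_nhds (show (0:ℝ) < tb/2 by linarith))).exists
    set t' : ℝ := (T - τs K) + tb with ht'def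
    have hτKT : 0 ≤ T - τs K := by have := hτT K; linarith
    have ht'pos : 0 < t' := by rw [ht'def]; linarith
    have hτK : τs K < 1 := lt_of_le_of_lt (hτT K) hT1'
    have hmax := ((hstepk K).2.2.2 hτK).2
    have hadm : Adm (τs K) (us K) (ws K) t' := by
      refine ⟨ht'pos, by rw [ht'def]; linarith, t'⁻¹ • (uhat - us K + tb • a), z, ?_, ?_, ?_⟩
      · intro n
        have h1 : p n (uhat - us K + tb • a) ≤ t' * s n := by
          calc p n (uhat - us K + tb • a)
              ≤ p n (uhat - us K) + p n (tb • a) := map_add_le_add _ _ _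
            _ ≤ (T - τs K) * s n + tb * s n := by
                refine add_le_add (hi K n) ?_
                rw [map_smul_eq_mul, Real.norm_eq_abs, abs_of_pos htb]
                exact mul_le_mul_of_nonneg_left (ha n) htb.le
            _ = t' * s n := by rw [ht'def]; ring
        calc p n (t'⁻¹ • (uhat - us K + tb • a))
            = t'⁻¹ * p n (uhat - us K + tb • a) := by
              rw [map_smul_eq_mul, Real.norm_eq_abs, abs_of_pos (inv_pos.2 ht'pos)]
          _ ≤ t'⁻¹ * (t' * s n) := mul_le_mul_of_nonneg_left h1 (inv_pos.2 ht'pos).le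
          _ = s n := by field_simp
      · rw [smul_inv_smul₀ ht'pos.ne']
        have heq : x + us K + (uhat - us K + tb • a) = x + uhat + tb • a := by abel
        rwa [heq]
      · have hsplit : ws K + t' • c = (ws K + (T - τs K) • c) + tb • c := by
          rw [ht'def, add_smul]; abel
        calc frechetRho q z (ws K + t' • c)
            ≤ frechetRho q z (what + tb • c)
              + frechetRho q (what + tb • c) (ws K + t' • c) := frechetRho_triangle q _ _ _
          _ ≤ ε' / 2 * tb + ε' * (T - τs K) := by
              rw [hsplit, frechetRho_translate]
              exact add_le_add herr (hj K)
          _ ≤ ε' * t' := by rw [ht'def]; nlinarith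
    have hle := hmax t' hadm
    have htbt' : tb ≤ t' := by rw [ht'def]; linarith
    linarith


/-- under the hypotheses of the cornerstone theorem, if moreover `Πₛ(X)`
is compact (sequentially, in the Fréchet metric), then `F(x + Πₛ(X)) ⊇ y + C`
without closure. -/
theorem stmt12 {X Y : Type*} [AddCommGroup X] [Module ℝ X] [AddCommGroup Y] [Module ℝ Y]
    (p : ℕ → Seminorm ℝ X) (q : ℕ → Seminorm ℝ Y)
    (hsepX : ∀ x : X, (∀ n, p n x = 0) → x = 0)
    (hsepY : ∀ y : Y, (∀ n, q n y = 0) → y = 0)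
    (hcompX : ∀ u : ℕ → X,
      (∀ ε > (0 : ℝ), ∃ N, ∀ m ≥ N, ∀ k ≥ N, frechetRho p (u m) (u k) < ε) →
      ∃ x : X, Tendsto (fun k => frechetRho p (u k) x) atTop (𝓝 0))
    (hcompY : ∀ u : ℕ → Y,
      (∀ ε > (0 : ℝ), ∃ N, ∀ m ≥ N, ∀ k ≥ N, frechetRho q (u m) (u k) < ε) →
      ∃ y : Y, Tendsto (fun k => frechetRho q (u k) y) atTop (𝓝 0))
    (F : X → Set Y)
    (hgraph : ∀ (u : ℕ → X) (w : ℕ → Y) (x : X) (y : Y), (∀ k, w k ∈ F (u k)) →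
      Tendsto (fun k => frechetRho p (u k) x) atTop (𝓝 0) →
      Tendsto (fun k => frechetRho q (w k) y) atTop (𝓝 0) → y ∈ F x)
    (U : Set X) (V : Set Y) (hU : RhoOpen p U) (hV : RhoOpen q V)
    (hne : ∃ x y, y ∈ F x ∧ x ∈ U ∧ y ∈ V)
    (s : ℕ → ℝ) (hs : ∀ n, 0 ≤ s n)
    (C : Set Y) (hC : C.Nonempty)
    (hD : ∀ x y, y ∈ F x → x ∈ U → y ∈ V → C ⊆ contVar q F x y (PiS p s))
    -- `Πₛ(X)` is compact in the Fréchet metric: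
    (hcpt : ∀ u : ℕ → X, (∀ k, u k ∈ PiS p s) →
      ∃ xb ∈ PiS p s, ∃ φ : ℕ → ℕ, StrictMono φ ∧
        Tendsto (fun k => frechetRho p (u (φ k)) xb) atTop (𝓝 0)) :
    ∀ x y, y ∈ F x → (∀ u ∈ PiS p s, x + u ∈ U) →
      (∀ c ∈ C, ∀ t ∈ Set.Icc (0 : ℝ) 1, y + t • c ∈ V) →
      ∀ c ∈ C, y + c ∈ ⋃ u ∈ PiS p s, F (x + u) := by
  intro x y hxy hxU hyV c hc
  -- a uniform "Lebesgue number" for V around the segment [y, y + c]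
  have hleb : ∃ ε₀ > (0:ℝ), ∀ t ∈ Icc (0:ℝ) 1, ∀ z, frechetRho q z (y + t • c) ≤ ε₀ → z ∈ V := by
    by_contra hcon
    push_neg at hcon
    have hseq : ∀ k : ℕ, ∃ t ∈ Icc (0:ℝ) 1, ∃ z,
        frechetRho q z (y + t • c) ≤ 1/((k:ℝ)+1) ∧ z ∉ V := by
      intro k
      obtain ⟨t, ht, z, h1, h2⟩ := hcon (1/((k:ℝ)+1)) (by positivity)
      exact ⟨t, ht, z, h1, h2⟩
    choose ts hts zs hzs hznV using hseq
    obtain ⟨t₀, ht₀, φ, hφ, hφt⟩ :=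
      (isCompact_Icc (a := (0:ℝ)) (b := 1)).tendsto_subseq hts
    obtain ⟨δ, hδ, hδV⟩ := hV (y + t₀ • c) (hyV c hc t₀ ht₀)
    have h1 : Tendsto (fun k => frechetRho q (y + ts (φ k) • c) (y + t₀ • c)) atTop (𝓝 0) := by
      have heq : (fun k => frechetRho q (y + ts (φ k) • c) (y + t₀ • c))
          = fun k => frechetRho q ((ts (φ k) - t₀) • c) 0 := by
        funext k
        rw [frechetRho_sub_zero]
        congr 1
        rw [sub_smul]
        abel
      rw [heq]
      apply rho_zero_of_seminorms
      intro n
      have habs : Tendsto (fun k => |ts (φ k) - t₀|) atTop (𝓝 0) := by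
        have h := hφt.sub_const t₀
        rw [sub_self] at h
        simpa using h.abs
      have hm := habs.mul_const (q n c)
      rw [zero_mul] at hm
      have heq2 : (fun k => q n ((ts (φ k) - t₀) • c)) = fun k => |ts (φ k) - t₀| * q n c := by
        funext k; rw [map_smul_eq_mul, Real.norm_eq_abs]
      rw [heq2]; exact hm
    have h2 : Tendsto (fun k => frechetRho q (zs (φ k)) (y + ts (φ k) • c)) atTop (𝓝 0) := by
      apply squeeze_zero (fun k => frechetRho_nonneg q _ _)
        (fun k => (hzs (φ k)).trans ?_) tendsto_one_div_add_atTop_nhds_zero_nat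
      have hk : (k:ℝ) + 1 ≤ (φ k : ℝ) + 1 := by
        have := hφ.le_apply (x := k)
        exact_mod_cast Nat.add_le_add_right this 1
      exact one_div_le_one_div_of_le (by positivity) hk
    have hev : ∀ᶠ k in atTop,
        frechetRho q (y + t₀ • c) (zs (φ k)) < δ := by
      filter_upwards [h1.eventually (eventually_lt_nhds (half_pos hδ)),
        h2.eventually (eventually_lt_nhds (half_pos hδ))] with k hk1 hk2
      have htri := frechetRho_triangle q (y + t₀ • c) (y + ts (φ k) • c) (zs (φ k))
      have hc1 : frechetRho q (y + t₀ • c) (y + ts (φ k) • c)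
          = frechetRho q (y + ts (φ k) • c) (y + t₀ • c) := frechetRho_comm q _ _
      have hc2 : frechetRho q (y + ts (φ k) • c) (zs (φ k))
          = frechetRho q (zs (φ k)) (y + ts (φ k) • c) := frechetRho_comm q _ _
      rw [hc1, hc2] at htri
      calc frechetRho q (y + t₀ • c) (zs (φ k)) ≤ _ + _ := htri
        _ < δ/2 + δ/2 := add_lt_add hk1 hk2
        _ = δ := by ring
    obtain ⟨k, hk⟩ := hev.exists
    exact hznV (φ k) (hδV _ hk)
  obtain ⟨ε₀, hε₀, hV₀⟩ := hleb
  have key : ∀ k : ℕ, ∃ u ∈ PiS p s, ∃ w ∈ F (x + u),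
      frechetRho q w (y + c) ≤ min ε₀ (1/((k:ℝ)+1)) := by
    intro k
    exact cornerstone_key p q hcompX hcompY F hgraph U V s hs C hD x y c hc hxy hxU ε₀ _
      hV₀ (lt_min hε₀ (by positivity)) (min_le_left _ _)
  choose un hun wn hwn hwρ using key
  obtain ⟨ub, hub, φ, hφ, hφu⟩ := hcpt un hun
  have hfin : y + c ∈ F (x + ub) := by
    apply hgraph (fun j => x + un (φ j)) (fun j => wn (φ j)) (x + ub) (y + c)
      (fun j => hwn (φ j))
    · have heq : (fun j => frechetRho p (x + un (φ j)) (x + ub))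
          = fun j => frechetRho p (un (φ j)) ub := by
        funext j
        rw [show x + un (φ j) = un (φ j) + x by abel, show x + ub = ub + x by abel,
          frechetRho_translate]
      rw [heq]; exact hφu
    · apply squeeze_zero (fun j => frechetRho_nonneg q _ _)
        (fun j => ((hwρ (φ j)).trans (min_le_right _ _)).trans ?_)
        tendsto_one_div_add_atTop_nhds_zero_nat
      have hk : (j:ℝ) + 1 ≤ (φ j : ℝ) + 1 := by
        have := hφ.le_apply (x := j)
        exact_mod_cast Nat.add_le_add_right this 1
      exact one_div_le_one_div_of_le (by positivity) hk
  exact Set.mem_biUnion hub hfin
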